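/- Let D ⊆ ℝⁿ be an open set containing the origin, let f : ℝⁿ → ℝⁿ be locally Lipschitz with f(0) = 0, and let V : ℝⁿ → ℝ be continuously differentiable on D with V(0) = 0, V(x) > 0 for all x ∈ D \ {0}, and ⟨∇V(x), f(x)⟩ < 0 for all x ∈ D \ {0}. Let c > 0 be such that the sublevel set V^c = {x ∈ D : V(x) ≤ c} is compact and contained in the interior of D. Then V^c is a region of attraction: every solution x(·) of ẋ = f(x) with x(0) ∈ V^c satisfies x(t) ∈ V^c for all t ≥ 0 and x(t) → 0 as t → ∞. -/

import Mathlib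

open Filter Topology Set

theorem lyapunov_sublevel_region_of_attraction {n : ℕ}
    (D : Set (EuclideanSpace ℝ (Fin n))) (hD : IsOpen D) (h0D : (0 : EuclideanSpace ℝ (Fin n)) ∈ D)
    (f : EuclideanSpace ℝ (Fin n) → EuclideanSpace ℝ (Fin n))
    (hf : LocallyLipschitz f) (hf0 : f 0 = 0)
    (V : EuclideanSpace ℝ (Fin n) → ℝ) (hV : ContDiffOn ℝ 1 V D)
    (hV0 : V 0 = 0) (hVpos : ∀ x ∈ D, x ≠ 0 → 0 < V x)
    (hVdot : ∀ x ∈ D, x ≠ 0 → inner ℝ (gradient V x) (f x) < (0 : ℝ))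
    (c : ℝ) (hc : 0 < c)
    (hcompact : IsCompact {x ∈ D | V x ≤ c})
    (hinterior : {x ∈ D | V x ≤ c} ⊆ interior D) :
    ∀ sol : ℝ → EuclideanSpace ℝ (Fin n),
      (∀ t ≥ (0 : ℝ), HasDerivAt sol (f (sol t)) t) →
      sol 0 ∈ {x ∈ D | V x ≤ c} →
      (∀ t ≥ (0 : ℝ), sol t ∈ {x ∈ D | V x ≤ c}) ∧ Tendsto sol atTop (𝓝 0) := by
  intro sol hsol h0
  set K := {x ∈ D | V x ≤ c} with hKdef
  have hKD : K ⊆ D := fun x hx => hx.1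
  have hVcont : ContinuousOn V D := hV.continuousOn
  have hsolc : ∀ t : ℝ, 0 ≤ t → ContinuousAt sol t := fun t ht => (hsol t ht).continuousAt
  have hKclosed : IsClosed K := hcompact.isClosed
  -- the "Lyapunov derivative" function
  set W : EuclideanSpace ℝ (Fin n) → ℝ := fun x => inner ℝ (gradient V x) (f x) with hWdef
  have hWcont : ContinuousOn W D := by
    have h1 : ContinuousOn (fun x => fderiv ℝ V x) D :=
      hV.continuousOn_fderiv_of_isOpen hD le_rfl
    have h2 : ContinuousOn (fun x => gradient V x) D :=
      ((InnerProductSpace.toDual ℝ (EuclideanSpace ℝ (Fin n))).symm.continuous).comp_continuousOn h1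
    exact ContinuousOn.inner h2 hf.continuous.continuousOn
  have hWle : ∀ x ∈ D, W x ≤ 0 := by
    intro x hx
    by_cases h : x = 0
    · simp [hWdef, h, hf0]
    · exact (hVdot x hx h).le
  -- chain rule
  have hchain : ∀ t : ℝ, 0 ≤ t → sol t ∈ D →
      HasDerivAt (fun s => V (sol s)) (W (sol t)) t := by
    intro t ht hx
    have hdiff : DifferentiableAt ℝ V (sol t) :=
      (hV.differentiableOn one_ne_zero).differentiableAt (hD.mem_nhds hx)
    have hg := hdiff.hasGradientAt.hasFDerivAt
    have := hg.comp_hasDerivAt t (hsol t ht)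
    simpa [hWdef, InnerProductSpace.toDual_apply_apply] using
      (show HasDerivAt (fun s => V (sol s)) _ t from this)
  -- Part 1 : forward invariance
  have inv : ∀ t : ℝ, 0 ≤ t → sol t ∈ K := by
    intro b hb
    set P : Set ℝ := {t | ∀ s ∈ Icc (0:ℝ) t, sol s ∈ K} with hPdef
    suffices h : Icc (0:ℝ) b ⊆ P by
      exact (h ⟨hb, le_rfl⟩) b ⟨hb, le_rfl⟩
    apply IsClosed.Icc_subset_of_forall_exists_gt
    · -- closedness
      apply IsSeqClosed.isClosed
      intro u t hu hut
      have htI : t ∈ Icc (0:ℝ) b :=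
        isClosed_Icc.mem_of_tendsto hut (Eventually.of_forall fun k => (hu k).2)
      refine ⟨?_, htI⟩
      intro s hs
      by_cases hex : ∃ k, s ≤ u k
      · obtain ⟨k, hk⟩ := hex
        exact (hu k).1 s ⟨hs.1, hk⟩
      · push_neg at hex
        have hst : s = t := le_antisymm hs.2 (le_of_tendsto hut (Eventually.of_forall fun k => (hex k).le))
        have hcont : Tendsto (fun k => sol (u k)) atTop (𝓝 (sol t)) :=
          ((hsolc t htI.1).tendsto).comp hut
        have : sol t ∈ K :=
          hKclosed.mem_of_tendsto hcont
            (Eventually.of_forall fun k => (hu k).1 (u k) ⟨(hu k).2.1, le_rfl⟩)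
        rwa [hst]
    · -- 0 ∈ P
      intro s hs
      have : s = 0 := le_antisymm hs.2 hs.1
      rwa [this]
    · -- can always go a bit further
      rintro x ⟨hxP, hx0, hxb⟩ y hy
      have hxK : sol x ∈ K := hxP x ⟨hx0, le_rfl⟩
      have ev1 : ∀ᶠ s in 𝓝 x, sol s ∈ D := by
        filter_upwards [(hsolc x hx0).eventually_mem (isOpen_interior.mem_nhds (hinterior hxK))]
          with s hs using interior_subset hs
      have ev2 : ∀ᶠ s in 𝓝[>] x, V (sol s) ≤ c := by
        rcases lt_or_eq_of_le hxK.2 with hlt | heq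
        · have hcV : ContinuousAt (fun s => V (sol s)) x :=
            (hVcont.continuousAt (hD.mem_nhds (hKD hxK))).comp (hsolc x hx0)
          have := hcV.eventually_lt_const hlt
          exact (this.mono fun s hs => hs.le).filter_mono nhdsWithin_le_nhds
        · have hne : sol x ≠ 0 := by
            intro h
            rw [h, hV0] at heq
            exact absurd heq.symm (ne_of_gt hc)
          have hd : W (sol x) < 0 := hVdot _ (hKD hxK) hne
          have hder := hchain x hx0 (hKD hxK)
          have hslope : Tendsto (slope (fun s => V (sol s)) x) (𝓝[>] x) (𝓝 (W (sol x))) :=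
            (hasDerivAt_iff_tendsto_slope.1 hder).mono_left
              (nhdsWithin_mono x fun s hs => ne_of_gt hs)
          have hev : ∀ᶠ s in 𝓝[>] x, slope (fun s => V (sol s)) x s < 0 :=
            hslope.eventually_lt_const hd
          filter_upwards [hev, self_mem_nhdsWithin] with s hs hsx
          rw [slope_def_field] at hs
          have hpos : 0 < s - x := sub_pos.2 hsx
          have : V (sol s) - V (sol x) < 0 := by
            have := (div_neg_iff.1 hs)
            rcases this with ⟨h1, h2⟩ | ⟨h1, h2⟩
            · linarith
            · linarith
          linarith [hxK.2]
      obtain ⟨u, hu, huI⟩ := mem_nhdsGT_iff_exists_Ioc_subset.1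
        ((ev1.filter_mono nhdsWithin_le_nhds).and ev2)
      refine ⟨min u y, ?_, lt_min hu hy, min_le_right _ _⟩
      intro s hs
      rcases le_or_gt s x with h | h
      · exact hxP s ⟨hs.1, h⟩
      · have : s ∈ Ioc x u := ⟨h, le_trans hs.2 (min_le_left _ _)⟩
        exact ⟨(huI this).1, (huI this).2⟩
  -- the Lyapunov function along the solution
  set g : ℝ → ℝ := fun t => V (sol t) with hgdef
  have hgC : ContinuousOn g (Ici 0) := fun t ht =>
    ((hchain t ht (hKD (inv t ht))).continuousAt).continuousWithinAt
  have hganti : AntitoneOn g (Ici (0:ℝ)) := by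
    apply antitoneOn_of_deriv_nonpos (convex_Ici 0) hgC
    · intro t ht
      rw [interior_Ici] at ht
      exact ((hchain t ht.le (hKD (inv t ht.le))).differentiableAt).differentiableWithinAt
    · intro t ht
      rw [interior_Ici] at ht
      rw [(hchain t ht.le (hKD (inv t ht.le))).deriv]
      exact hWle _ (hKD (inv t ht.le))
  have hg0 : ∀ t : ℝ, 0 ≤ t → 0 ≤ g t := by
    intro t ht
    by_cases h : sol t = 0
    · simp [hgdef, h, hV0]
    · exact (hVpos _ (hKD (inv t ht)) h).le
  -- limit of g
  set h : ℝ → ℝ := fun t => g (max t 0) with hhdef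
  have hanti : Antitone h := by
    intro s t hst
    exact hganti (le_max_right s 0) (le_max_right t 0) (max_le_max hst le_rfl)
  have hbdd : BddBelow (Set.range h) := by
    refine ⟨0, ?_⟩
    rintro _ ⟨t, rfl⟩
    exact hg0 _ (le_max_right t 0)
  set l : ℝ := ⨅ t, h t with hldef
  have hhtends : Tendsto h atTop (𝓝 l) := tendsto_atTop_ciInf hanti hbdd
  have hgh : g =ᶠ[atTop] h := by
    filter_upwards [eventually_ge_atTop (0:ℝ)] with t ht
    simp [hhdef, max_eq_left ht]
  have hgtends : Tendsto g atTop (𝓝 l) := hhtends.congr' hgh.symm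
  have hlle : ∀ t : ℝ, 0 ≤ t → l ≤ g t := by
    intro t ht
    have h2 : l ≤ h t := ciInf_le hbdd t
    simpa [hhdef, max_eq_left ht] using h2
  have hl0 : 0 ≤ l := le_ciInf fun t => hg0 _ (le_max_right t 0)
  -- l = 0
  have hlzero : l = 0 := by
    by_contra hne
    have hlpos : 0 < l := lt_of_le_of_ne hl0 (Ne.symm hne)
    set M : Set (EuclideanSpace ℝ (Fin n)) := {x ∈ K | l ≤ V x} with hMdef
    have hMK : M ⊆ K := fun x hx => hx.1
    have hMcl : IsClosed M := by
      have : M = K ∩ V ⁻¹' Ici l := by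
        ext x
        simp only [hMdef, Set.mem_setOf_eq, Set.mem_inter_iff, Set.mem_preimage, Set.mem_Ici]
      rw [this]
      exact ContinuousOn.preimage_isClosed_of_isClosed (hVcont.mono hKD) hKclosed isClosed_Ici
    have hMcomp : IsCompact M := hcompact.of_isClosed_subset hMcl hMK
    have hMne : M.Nonempty := ⟨sol 0, inv 0 le_rfl, hlle 0 le_rfl⟩
    obtain ⟨x₀, hx₀M, hmax⟩ := hMcomp.exists_isMaxOn hMne ((hWcont.mono (hMK.trans hKD)))
    have hx₀ne : x₀ ≠ 0 := by
      intro h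
      have h2 := hx₀M.2
      rw [h, hV0] at h2
      exact absurd h2 (not_le.2 hlpos)
    have hδ : W x₀ < 0 := hVdot _ (hKD (hMK hx₀M)) hx₀ne
    set δ : ℝ := -W x₀ with hδdef
    have hδpos : 0 < δ := neg_pos.2 hδ
    -- F t = g t + δ t is antitone on [0,∞)
    set F : ℝ → ℝ := fun t => g t + δ * t with hFdef
    have hFder : ∀ t : ℝ, 0 ≤ t → HasDerivAt F (W (sol t) + δ) t := by
      intro t ht
      have h2 : HasDerivAt (fun s : ℝ => δ * s) δ t := by
        simpa using (hasDerivAt_id t).const_mul δ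
      exact (hchain t ht (hKD (inv t ht))).add h2
    have hFanti : AntitoneOn F (Ici (0:ℝ)) := by
      apply antitoneOn_of_deriv_nonpos (convex_Ici 0)
      · exact fun t ht => ((hFder t ht).continuousAt).continuousWithinAt
      · intro t ht
        rw [interior_Ici] at ht
        exact ((hFder t ht.le).differentiableAt).differentiableWithinAt
      · intro t ht
        rw [interior_Ici] at ht
        rw [(hFder t ht.le).deriv]
        have hM : sol t ∈ M := ⟨inv t ht.le, hlle t ht.le⟩
        have : W (sol t) ≤ W x₀ := hmax hM
        rw [hδdef]; linarith
    set T : ℝ := (g 0 + 1) / δ with hTdef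
    have hT0 : 0 ≤ T := div_nonneg (by linarith [hg0 0 le_rfl]) hδpos.le
    have := hFanti (self_mem_Ici) hT0 hT0
    have hgT : g T + δ * T ≤ g 0 := by simpa [hFdef] using this
    have hδT : δ * T = g 0 + 1 := by
      rw [hTdef, mul_div_cancel₀ _ (ne_of_gt hδpos)]
    have := hg0 T hT0
    linarith
  -- conclude
  refine ⟨fun t ht => inv t ht, ?_⟩
  rw [hlzero] at hgtends
  rw [NormedAddCommGroup.tendsto_nhds_zero]
  intro ε hε
  set Kε : Set (EuclideanSpace ℝ (Fin n)) := {x ∈ K | ε ≤ ‖x‖} with hKεdef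
  by_cases hne : Kε.Nonempty
  · have hKεcl : IsClosed Kε := by
      have : Kε = K ∩ (fun x => ‖x‖) ⁻¹' Ici ε := by
        ext x
        simp only [hKεdef, Set.mem_setOf_eq, Set.mem_inter_iff, Set.mem_preimage, Set.mem_Ici]
      rw [this]
      exact hKclosed.inter (isClosed_Ici.preimage continuous_norm)
    have hKεcomp : IsCompact Kε := hcompact.of_isClosed_subset hKεcl (fun x hx => hx.1)
    obtain ⟨x₁, hx₁, hmin⟩ := hKεcomp.exists_isMinOn hne
      (hVcont.mono (fun x hx => hKD hx.1))
    have hx₁ne : x₁ ≠ 0 := by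
      intro h
      have h2 := hx₁.2
      rw [h, norm_zero] at h2
      exact absurd h2 (not_le.2 hε)
    have hm : 0 < V x₁ := hVpos _ (hKD hx₁.1) hx₁ne
    have hev : ∀ᶠ t in atTop, g t < V x₁ := hgtends.eventually_lt_const hm
    filter_upwards [hev, eventually_ge_atTop (0:ℝ)] with t hgt ht
    by_contra hcon
    push_neg at hcon
    have : sol t ∈ Kε := ⟨inv t ht, hcon⟩
    exact absurd (hmin this) (not_le.2 hgt)
  · filter_upwards [eventually_ge_atTop (0:ℝ)] with t ht
    by_contra hcon
    push_neg at hcon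
    exact hne ⟨sol t, inv t ht, hcon⟩
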